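/- Let Γ be a weighted congestion game fulfilling Conditions 1–2, and let Φ(S) = ∑_{e∈𝔼} Ψ_e(L(U_e(S))) where Ψ_e(x) = a_{e,0}·x + ∑_{k=1}^d a_{e,k}·(x^{k+1}/(k+1) + x^k/2). Then for every profile S, Φ(S) ≤ C(S) = ∑_{u∈𝒩} c_u(S). -/

import Mathlib

/-- `hpoly k l` is the complete homogeneous symmetric polynomial of degree `k`
evaluated at the entries of the list `l`, i.e. the sum of all monomials of
total degree `k` in the elements of `l`. -/
noncomputable def hpoly : ℕ → List ℝ → ℝ
  | 0, _ => 1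
  | _ + 1, [] => 0
  | k + 1, a :: l => a * hpoly k (a :: l) + hpoly (k + 1) l
termination_by k l => (k, l.length)

/-- The `k`-order `Ψ̂`-function of a multiset `M` of reals:
`Ψ̂_k(M) = k! ·` (sum of all monomials of total degree `k` in the elements of `M`).
In particular `Ψ̂_0(M) = 1` and `Ψ̂_k(∅) = 0` for `k ≥ 1`. -/
noncomputable def psiHat (k : ℕ) (M : Multiset ℝ) : ℝ :=
  (Nat.factorial k : ℝ) * hpoly k M.toList

/-- A weighted congestion game with `N` players, `E` resources, polynomial latency
functions of degree at most `d` (Condition 2, with coefficient-ratio bound `A`),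
and players' weights in `[1, W]` (Condition 1). -/
structure WCGame (N E d : ℕ) (W A : ℝ) where
  /-- the strategy set of each player: a set of nonempty subsets of resources -/
  strat : Fin N → Set (Finset (Fin E))
  strat_nonempty : ∀ u, (strat u).Nonempty
  strat_valid : ∀ u, ∀ s ∈ strat u, s.Nonempty
  /-- the weight of each player -/
  w : Fin N → ℝ
  /-- `a e k` is the coefficient of `x^k` in the latency function of resource `e` -/
  a : Fin E → ℕ → ℝ
  hd : 1 ≤ d
  hW : 1 ≤ W
  hw_lower : ∀ u, 1 ≤ w u
  hw_upper : ∀ u, w u ≤ W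
  ha_nonneg : ∀ e k, 0 ≤ a e k
  ha_pos : ∀ e, 0 < ∑ k ∈ Finset.range (d + 1), a e k
  hA_pos : 0 < A
  hA_bound : ∀ e e' k k', k ≤ d → k' ≤ d → 0 < a e k → a e' k' ≤ A * a e k

namespace WCGame

/-- A (pure strategy) profile: a choice of a set of resources for every player. -/
abbrev Profile (N E : ℕ) := Fin N → Finset (Fin E)

variable {N E d : ℕ} {W A : ℝ}

/-- A profile is feasible if every player uses one of her strategies. -/
def IsProfile (G : WCGame N E d W A) (S : Profile N E) : Prop :=
  ∀ u, S u ∈ G.strat u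

/-- `U_e(S)`: the multiset of weights of the players using resource `e` in profile `S`. -/
noncomputable def load (G : WCGame N E d W A) (S : Profile N E) (e : Fin E) : Multiset ℝ :=
  (Finset.univ.filter (fun u => e ∈ S u)).val.map G.w

/-- The cost `c_u(S) = w_u · ∑_{e ∈ s_u} ∑_{k=0}^d a_{e,k} · L(U_e(S))^k` of player `u`
in the original game `Γ`. -/
noncomputable def cost (G : WCGame N E d W A) (S : Profile N E) (u : Fin N) : ℝ :=
  G.w u * ∑ e ∈ S u, ∑ k ∈ Finset.range (d + 1), G.a e k * (G.load S e).sum ^ k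

/-- The cost `ĉ_u(S) = w_u · ∑_{e ∈ s_u} ∑_{k=0}^d a_{e,k} · Ψ̂_k(U_e(S))` of player `u`
in the `Ψ̂`-game `Γ̂`. -/
noncomputable def hcost (G : WCGame N E d W A) (S : Profile N E) (u : Fin N) : ℝ :=
  G.w u * ∑ e ∈ S u, ∑ k ∈ Finset.range (d + 1), G.a e k * psiHat k (G.load S e)

/-- The potential function `Φ̂(S) = ∑_e ∑_{k=0}^d (a_{e,k}/(k+1)) · Ψ̂_{k+1}(U_e(S))`
of the `Ψ̂`-game. -/
noncomputable def potHat (G : WCGame N E d W A) (S : Profile N E) : ℝ :=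
  ∑ e : Fin E, ∑ k ∈ Finset.range (d + 1),
    G.a e k / ((k : ℝ) + 1) * psiHat (k + 1) (G.load S e)

/-- The approximate potential function `Φ(S) = ∑_e Ψ_e(L(U_e(S)))` with
`Ψ_e(x) = a_{e,0}·x + ∑_{k=1}^d a_{e,k}·(x^{k+1}/(k+1) + x^k/2)`. -/
noncomputable def pot (G : WCGame N E d W A) (S : Profile N E) : ℝ :=
  ∑ e : Fin E,
    (G.a e 0 * (G.load S e).sum +
      ∑ k ∈ Finset.Icc 1 d,
        G.a e k * ((G.load S e).sum ^ (k + 1) / ((k : ℝ) + 1) + (G.load S e).sum ^ k / 2))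

/-- `S` is a `ρ`-approximate pure Nash equilibrium w.r.t. the player costs `costFn`:
no player can decrease her cost by more than a factor `ρ` by a unilateral deviation. -/
def IsApproxPNE (G : WCGame N E d W A) (costFn : Profile N E → Fin N → ℝ) (ρ : ℝ)
    (S : Profile N E) : Prop :=
  ∀ u, ∀ s' ∈ G.strat u, costFn S u ≤ ρ * costFn (Function.update S u s') u

/-- `sstar u` is a best response of player `u` to `S₋ᵤ` w.r.t. the costs `costFn`. -/
def IsBestResponses (G : WCGame N E d W A) (costFn : Profile N E → Fin N → ℝ)
    (S : Profile N E) (sstar : Fin N → Finset (Fin E)) : Prop :=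
  ∀ u, sstar u ∈ G.strat u ∧
    ∀ s ∈ G.strat u, costFn (Function.update S u (sstar u)) u ≤ costFn (Function.update S u s) u

/-- One step of Algorithm 1 (the `1/(1-ε)` best response dynamic on the `Ψ̂`-game),
moving from profile `S` to profile `S'` by letting the chosen player `ut` (a player with a
`1/(1-ε)`-move of maximum cost reduction) switch to her best response `sstar ut`. -/
def AlgOneStep (G : WCGame N E d W A) (ε : ℝ) (S S' : Profile N E) (ut : Fin N)
    (sstar : Fin N → Finset (Fin E)) : Prop :=
  G.IsBestResponses G.hcost S sstar ∧
  G.hcost S ut > (1 / (1 - ε)) * G.hcost (Function.update S ut (sstar ut)) ut ∧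
  (∀ u, G.hcost S u > (1 / (1 - ε)) * G.hcost (Function.update S u (sstar u)) u →
    G.hcost S ut - G.hcost (Function.update S ut (sstar ut)) ut ≥
      G.hcost S u - G.hcost (Function.update S u (sstar u)) u) ∧
  S' = Function.update S ut (sstar ut)

/-- One step of Algorithm 2 (the refined `ρ/(1-ε)` best response dynamic on `Γ`),
moving from profile `S` to profile `S'` by letting the chosen player `ut` (a player
maximizing `c_u(S) - ρ·c_u(s_u^*, S₋ᵤ)` among players with `ρ/(1-ε)`-moves) switch to
her best response `sstar ut`. -/
def AlgTwoStep (G : WCGame N E d W A) (ρ ε : ℝ) (S S' : Profile N E) (ut : Fin N)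
    (sstar : Fin N → Finset (Fin E)) : Prop :=
  G.IsBestResponses G.cost S sstar ∧
  G.cost S ut > (ρ / (1 - ε)) * G.cost (Function.update S ut (sstar ut)) ut ∧
  (∀ u, G.cost S u > (ρ / (1 - ε)) * G.cost (Function.update S u (sstar u)) u →
    G.cost S ut - ρ * G.cost (Function.update S ut (sstar ut)) ut ≥
      G.cost S u - ρ * G.cost (Function.update S u (sstar u)) u) ∧
  S' = Function.update S ut (sstar ut)

/-- `c_max`: the maximum cost of a player over all (feasible) profiles in `Γ`. -/
noncomputable def cMax (G : WCGame N E d W A) : ℝ :=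
  sSup {x | ∃ S u, G.IsProfile S ∧ x = G.cost S u}

/-- `ĉ_max`: the maximum cost of a player over all (feasible) profiles in `Γ̂`. -/
noncomputable def hcMax (G : WCGame N E d W A) : ℝ :=
  sSup {x | ∃ S u, G.IsProfile S ∧ x = G.hcost S u}

/-- `Φ̂_min`: the minimum of the potential `Φ̂` over all (feasible) profiles. -/
noncomputable def potHatMin (G : WCGame N E d W A) : ℝ :=
  sInf {x | ∃ S, G.IsProfile S ∧ x = G.potHat S}

/-- `a_min⁺`: the minimum positive coefficient of the latency functions. -/
noncomputable def aMinPos (G : WCGame N E d W A) : ℝ :=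
  sInf {x | 0 < x ∧ ∃ e k, k ≤ d ∧ x = G.a e k}

end WCGame

open WCGame in
/-- Lemma 6: for every profile `S`, `Φ(S) ≤ C(S) = ∑_u c_u(S)`. -/
theorem pot_le_total_cost {N E d : ℕ} {W A : ℝ}
    (G : WCGame N E d W A) (S : Profile N E) (hS : G.IsProfile S) :
    G.pot S ≤ ∑ u : Fin N, G.cost S u := by

  classical
  have hload : ∀ e, (G.load S e).sum = ∑ u ∈ Finset.univ.filter (fun u => e ∈ S u), G.w u :=
    fun e => rfl
  set L : Fin E → ℝ := fun e => (G.load S e).sum with hLdef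
  have hL01 : ∀ e, L e = 0 ∨ 1 ≤ L e := by
    intro e
    rcases (Finset.univ.filter (fun u => e ∈ S u)).eq_empty_or_nonempty with h | h
    · left; simp [hLdef, hload, h]
    · right
      obtain ⟨u, hu⟩ := h
      have : G.w u ≤ ∑ v ∈ Finset.univ.filter (fun u => e ∈ S u), G.w v :=
        Finset.single_le_sum (fun i _ => le_trans zero_le_one (G.hw_lower i)) hu
      have := le_trans (G.hw_lower u) this
      simpa [hLdef, hload] using this
  have hLnn : ∀ e, 0 ≤ L e := fun e => (hL01 e).elim (fun h => le_of_eq h.symm) (fun h => zero_le_one.trans h)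
  have hC : ∑ u : Fin N, G.cost S u
      = ∑ e : Fin E, (∑ u ∈ Finset.univ.filter (fun u => e ∈ S u), G.w u) *
          (∑ k ∈ Finset.range (d + 1), G.a e k * L e ^ k) := by
    simp only [WCGame.cost]
    calc ∑ u : Fin N, G.w u * ∑ e ∈ S u, ∑ k ∈ Finset.range (d + 1), G.a e k * (G.load S e).sum ^ k
        = ∑ u : Fin N, ∑ e : Fin E, (if e ∈ S u then G.w u * ∑ k ∈ Finset.range (d + 1), G.a e k * L e ^ k else 0) := by
          refine Finset.sum_congr rfl fun u _ => ?_
          rw [Finset.mul_sum, Finset.sum_ite_mem, Finset.univ_inter]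
      _ = ∑ e : Fin E, ∑ u : Fin N, (if e ∈ S u then G.w u * ∑ k ∈ Finset.range (d + 1), G.a e k * L e ^ k else 0) :=
          Finset.sum_comm
      _ = ∑ e : Fin E, (∑ u ∈ Finset.univ.filter (fun u => e ∈ S u), G.w u) *
          (∑ k ∈ Finset.range (d + 1), G.a e k * L e ^ k) := by
          refine Finset.sum_congr rfl fun e _ => ?_
          rw [Finset.sum_mul, Finset.sum_filter]
  rw [hC]
  unfold WCGame.pot
  refine Finset.sum_le_sum fun e _ => ?_
  have hrw : (∑ u ∈ Finset.univ.filter (fun u => e ∈ S u), G.w u) = L e := (hload e).symm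
  rw [hrw]
  have hexp : L e * ∑ k ∈ Finset.range (d + 1), G.a e k * L e ^ k
      = G.a e 0 * L e + ∑ k ∈ Finset.Icc 1 d, G.a e k * L e ^ (k + 1) := by
    rw [Finset.mul_sum, Finset.sum_range_succ', ← Finset.Ico_add_one_right_eq_Icc,
      Finset.sum_Ico_eq_sum_range]
    rw [add_comm]
    refine congrArg₂ (· + ·) (by ring) (Finset.sum_congr rfl fun k _ => ?_)
    rw [Nat.add_comm 1 k]; ring
  rw [hexp]
  have : (G.load S e).sum = L e := rfl
  rw [this]
  refine add_le_add (le_refl _) (Finset.sum_le_sum fun k hk => ?_)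
  have hk1 : 1 ≤ k := (Finset.mem_Icc.mp hk).1
  rcases hL01 e with h0 | h1
  · rw [h0]
    rw [zero_pow (by omega), zero_pow (by omega)]
    simp
  · have hpow : L e ^ k ≤ L e ^ (k + 1) := pow_le_pow_right₀ h1 (Nat.le_succ k)
    have hnn : (0:ℝ) ≤ L e ^ (k + 1) := pow_nonneg (hLnn e) _
    have hdiv : L e ^ (k + 1) / ((k:ℝ) + 1) ≤ L e ^ (k + 1) / 2 := by
      apply div_le_div_of_nonneg_left hnn two_pos
      exact_mod_cast by omega
    refine mul_le_mul_of_nonneg_left ?_ (G.ha_nonneg e k)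
    calc L e ^ (k+1) / ((k:ℝ)+1) + L e ^ k / 2 ≤ L e ^ (k+1) / 2 + L e ^ (k+1) / 2 := by
          gcongr
      _ = L e ^ (k+1) := by ring
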